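/- Let G be a finite simple graph. Then th_⌊Z⌋(G) = min{ th_Z(H) : H is a spanning supergraph of G }. -/

import Mathlib

open SimpleGraph

namespace ZFT

variable {V : Type*} {α : Type*} {β : Type*}

/-! ### Standard zero forcing (simultaneous propagation) -/

/-- One round of simultaneous standard zero forcing: a blue vertex forces its
unique white neighbor. -/
def zStep (G : SimpleGraph V) (S : Set V) : Set V :=
  S ∪ {w | ∃ u ∈ S, G.Adj u w ∧ ∀ x, G.Adj u x → x ∉ S → x = w}

/-- `B` is a standard zero forcing set of `G`. -/
def IsZeroForcingSet (G : SimpleGraph V) (B : Set V) : Prop :=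
  ∃ t : ℕ, (zStep G)^[t] B = Set.univ

/-- The standard propagation time `pt_Z(G;B)` (`⊤` if `B` is not a zero forcing set). -/
noncomputable def ptZ (G : SimpleGraph V) (B : Set V) : ℕ∞ :=
  sInf {n : ℕ∞ | ∃ t : ℕ, n = t ∧ (zStep G)^[t] B = Set.univ}

/-- The standard throttling number `th_Z(G;B) = |B| + pt_Z(G;B)`. -/
noncomputable def thZ (G : SimpleGraph V) (B : Set V) : ℕ∞ :=
  (B.ncard : ℕ∞) + ptZ G B

/-- The standard throttling number `th_Z(G)`. -/
noncomputable def thZgraph (G : SimpleGraph V) : ℕ∞ :=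
  sInf {n : ℕ∞ | ∃ B : Set V, IsZeroForcingSet G B ∧ n = thZ G B}

/-- The standard zero forcing number `Z(G)`. -/
noncomputable def Znum (G : SimpleGraph V) : ℕ :=
  sInf {k : ℕ | ∃ B : Set V, IsZeroForcingSet G B ∧ B.ncard = k}

/-- The standard propagation time `pt_Z(G)`, minimized over minimum zero forcing sets. -/
noncomputable def ptZgraph (G : SimpleGraph V) : ℕ∞ :=
  sInf {n : ℕ∞ | ∃ B : Set V, IsZeroForcingSet G B ∧ B.ncard = Znum G ∧ n = ptZ G B}

/-! ### Sets of standard forces -/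

/-- Validity of a single standard force `u → w` when `blue` is the blue set. -/
def zForceValid (G : SimpleGraph V) (blue : Set V) (u w : V) : Prop :=
  u ∈ blue ∧ w ∉ blue ∧ G.Adj u w ∧ ∀ x, G.Adj u x → x ∉ blue → x = w

/-- Validity of a chronological list of standard forces starting from a blue set. -/
def zValidList (G : SimpleGraph V) : Set V → List (V × V) → Prop
  | _, [] => True
  | blue, p :: L => zForceValid G blue p.1 p.2 ∧ zValidList G (insert p.2 blue) L

/-- The blue set after performing all forces in a list, starting from `B`. -/
def endBlue (B : Set V) (L : List (V × V)) : Set V :=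
  B ∪ {w | ∃ u, (u, w) ∈ L}

/-- The set of vertices that have performed a force in a list. -/
def endForced (L : List (V × V)) : Set V := {u | ∃ w, (u, w) ∈ L}

/-- `F` is a set of standard forces of `B` in `G` (recorded from a maximal
chronological list of forces). -/
def IsZForceSet (G : SimpleGraph V) (B : Set V) (F : Set (V × V)) : Prop :=
  ∃ L : List (V × V), zValidList G B L ∧
    (∀ u w, ¬ zForceValid G (endBlue B L) u w) ∧ F = {p | p ∈ L}

/-- The set of blue vertices at time `t` when the forces of `F` are performed at the
earliest possible time steps, starting from `B` blue. -/
def zBlueAt (G : SimpleGraph V) (F : Set (V × V)) (B : Set V) : ℕ → Set V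
  | 0 => B
  | t + 1 =>
      zBlueAt G F B t ∪ {w | ∃ v, (v, w) ∈ F ∧ zForceValid G (zBlueAt G F B t) v w}

/-- The standard propagation time `pt_Z(G;F)` of a set of forces `F` of `B`. -/
noncomputable def ptZofF (G : SimpleGraph V) (F : Set (V × V)) (B : Set V) : ℕ∞ :=
  sInf {n : ℕ∞ | ∃ t : ℕ, n = t ∧ zBlueAt G F B t = Set.univ}

/-! ### `⌊Z⌋` (minor monotone floor) forcing -/

/-- Validity of a single `⌊Z⌋` force `u → w`: `u` is blue and has not yet forced, `w`
is white, and either `w` is the unique white neighbor of `u`, or all neighbors of `u`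
are blue (a hop). -/
def zfForceValid (G : SimpleGraph V) (blue forced : Set V) (u w : V) : Prop :=
  u ∈ blue ∧ w ∉ blue ∧ u ∉ forced ∧
    ((G.Adj u w ∧ ∀ x, G.Adj u x → x ∉ blue → x = w) ∨ ∀ x, G.Adj u x → x ∈ blue)

/-- Validity of a chronological list of `⌊Z⌋` forces. -/
def zfValidList (G : SimpleGraph V) : Set V → Set V → List (V × V) → Prop
  | _, _, [] => True
  | blue, forced, p :: L =>
      zfForceValid G blue forced p.1 p.2 ∧
        zfValidList G (insert p.2 blue) (insert p.1 forced) L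

/-- `F` is a set of `⌊Z⌋` forces of `B` in `G` (recorded from a maximal chronological
list of `⌊Z⌋` forces starting with `B` blue). -/
def IsZFForceSet (G : SimpleGraph V) (B : Set V) (F : Set (V × V)) : Prop :=
  ∃ L : List (V × V), zfValidList G B ∅ L ∧
    (∀ u w, ¬ zfForceValid G (endBlue B L) (endForced L) u w) ∧ F = {p | p ∈ L}

/-- The set of blue vertices at time `t` when the `⌊Z⌋` forces of `F` are performed at
the earliest possible time steps, starting from `B` blue. -/
def zfBlueAt (G : SimpleGraph V) (F : Set (V × V)) (B : Set V) : ℕ → Set V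
  | 0 => B
  | t + 1 =>
      zfBlueAt G F B t ∪
        {w | ∃ v, (v, w) ∈ F ∧ v ∈ zfBlueAt G F B t ∧ w ∉ zfBlueAt G F B t ∧
          (∀ w', (v, w') ∈ F → w' ∈ zfBlueAt G F B t → w' ∈ B) ∧
          ((G.Adj v w ∧ ∀ x, G.Adj v x → x ∉ zfBlueAt G F B t → x = w) ∨
            ∀ x, G.Adj v x → x ∈ zfBlueAt G F B t)}

/-- The `⌊Z⌋` propagation time `pt_⌊Z⌋(G;F)` of a set of `⌊Z⌋` forces `F` of `B`. -/
noncomputable def ptZFofF (G : SimpleGraph V) (F : Set (V × V)) (B : Set V) : ℕ∞ :=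
  sInf {n : ℕ∞ | ∃ t : ℕ, n = t ∧ zfBlueAt G F B t = Set.univ}

/-- The `⌊Z⌋` propagation time `pt_⌊Z⌋(G;B)`, minimized over sets of `⌊Z⌋` forces of `B`. -/
noncomputable def ptZF (G : SimpleGraph V) (B : Set V) : ℕ∞ :=
  sInf {n : ℕ∞ | ∃ F : Set (V × V), IsZFForceSet G B F ∧ n = ptZFofF G F B}

/-- The `⌊Z⌋` throttling number `th_⌊Z⌋(G;B) = |B| + pt_⌊Z⌋(G;B)`. -/
noncomputable def thZF (G : SimpleGraph V) (B : Set V) : ℕ∞ :=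
  (B.ncard : ℕ∞) + ptZF G B

/-- The `⌊Z⌋` throttling number `th_⌊Z⌋(G)`, minimized over all `B ⊆ V(G)`. -/
noncomputable def thZFgraph (G : SimpleGraph V) : ℕ∞ :=
  sInf {n : ℕ∞ | ∃ B : Set V, n = thZF G B}

/-- `B` is a `⌊Z⌋` forcing set of `G`. -/
def IsZFForcingSet (G : SimpleGraph V) (B : Set V) : Prop :=
  ∃ F : Set (V × V), IsZFForceSet G B F ∧ B ∪ {w | ∃ u, (u, w) ∈ F} = Set.univ

/-- The `⌊Z⌋` forcing number `⌊Z⌋(G)`. -/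
noncomputable def ZFnum (G : SimpleGraph V) : ℕ :=
  sInf {k : ℕ | ∃ B : Set V, IsZFForcingSet G B ∧ B.ncard = k}

/-- The `⌊Z⌋` propagation time `pt_⌊Z⌋(G)`, minimized over minimum `⌊Z⌋` forcing sets. -/
noncomputable def ptZFgraph (G : SimpleGraph V) : ℕ∞ :=
  sInf {n : ℕ∞ | ∃ B : Set V, IsZFForcingSet G B ∧ B.ncard = ZFnum G ∧ n = ptZF G B}

/-! ### Contractions, minors, and products -/

/-- The graph obtained from `H` by contracting (all) the edges in `C`: its vertices are
the connected components of the spanning subgraph of `H` with edge set `C ∩ E(H)`, and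
two distinct components are adjacent iff `H` has an edge between them. -/
def contractEdges (H : SimpleGraph α) (C : Set (Sym2 α)) :
    SimpleGraph (SimpleGraph.fromEdgeSet C ⊓ H).ConnectedComponent where
  Adj c d := c ≠ d ∧ ∃ a b, H.Adj a b ∧
      (SimpleGraph.fromEdgeSet C ⊓ H).connectedComponentMk a = c ∧
      (SimpleGraph.fromEdgeSet C ⊓ H).connectedComponentMk b = d
  symm := ⟨by
    rintro c d ⟨hcd, a, b, hab, ha, hb⟩
    exact ⟨hcd.symm, b, a, hab.symm, hb, ha⟩⟩
  loopless := ⟨fun c h => h.1 rfl⟩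

/-- `G` is a minor of `H`: `G` is isomorphic to a subgraph of a graph obtained from an
induced subgraph of `H` by contracting a set of edges. -/
def IsMinor (G : SimpleGraph β) (H : SimpleGraph α) : Prop :=
  ∃ (s : Set α) (C : Set (Sym2 s))
    (G'' : SimpleGraph (SimpleGraph.fromEdgeSet C ⊓ H.induce s).ConnectedComponent),
      G'' ≤ contractEdges (H.induce s) C ∧ Nonempty (G ≃g G'')

/-- The Cartesian product `K_a □ P_{b+1}`. -/
def prodKP (a b : ℕ) : SimpleGraph (Fin a × Fin (b + 1)) :=
  (⊤ : SimpleGraph (Fin a)) □ SimpleGraph.pathGraph (b + 1)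

/-- The path edges of `K_a □ P_{b+1}` (edges within the copies of `P_{b+1}`). -/
def pathEdges (a b : ℕ) : Set (Sym2 (Fin a × Fin (b + 1))) :=
  {e | ∃ (i : Fin a) (j j' : Fin (b + 1)),
    (SimpleGraph.pathGraph (b + 1)).Adj j j' ∧ e = s((i, j), (i, j'))}

/-- The complete edges of `K_a □ P_{b+1}` (edges within the copies of `K_a`). -/
def completeEdges (a b : ℕ) : Set (Sym2 (Fin a × Fin (b + 1))) :=
  {e | ∃ (i i' : Fin a) (j : Fin (b + 1)), i ≠ i' ∧ e = s((i, j), (i', j))}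

/-- The star `K_{1,n-1}` on `n` vertices: vertex `0` is adjacent to all others. -/
def starGraph (n : ℕ) : SimpleGraph (Fin n) where
  Adj i j := i ≠ j ∧ ((i : ℕ) = 0 ∨ (j : ℕ) = 0)
  symm := ⟨by rintro i j ⟨h1, h2⟩; exact ⟨h1.symm, h2.symm⟩⟩
  loopless := ⟨fun i h => h.1 rfl⟩

/-- The independence number `α(G)`. -/
noncomputable def indepNum (G : SimpleGraph V) : ℕ :=
  sSup {k : ℕ | ∃ s : Set V, (∀ a ∈ s, ∀ b ∈ s, a ≠ b → ¬ G.Adj a b) ∧ s.ncard = k}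


/-! ### Auxiliary lemmas for Statement 3 -/

section Stmt3Aux

lemma subset_zStep (G : SimpleGraph V) (S : Set V) : S ⊆ zStep G S :=
  Set.subset_union_left

lemma zStep_iter_mono (G : SimpleGraph V) (B : Set V) {s t : ℕ} (h : s ≤ t) :
    (zStep G)^[s] B ⊆ (zStep G)^[t] B := by
  induction t with
  | zero => simp_all
  | succ t ih =>
    rcases Nat.lt_or_ge s (t + 1) with h' | h'
    · refine (ih (Nat.lt_succ_iff.mp h')).trans ?_
      rw [Function.iterate_succ_apply']
      exact subset_zStep G _
    · have : s = t + 1 := le_antisymm h h'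
      subst this; rfl

lemma zfBlueAt_succ (G : SimpleGraph V) (F : Set (V × V)) (B : Set V) (t : ℕ) :
    zfBlueAt G F B (t + 1) =
      zfBlueAt G F B t ∪
        {w | ∃ v, (v, w) ∈ F ∧ v ∈ zfBlueAt G F B t ∧ w ∉ zfBlueAt G F B t ∧
          (∀ w', (v, w') ∈ F → w' ∈ zfBlueAt G F B t → w' ∈ B) ∧
          ((G.Adj v w ∧ ∀ x, G.Adj v x → x ∉ zfBlueAt G F B t → x = w) ∨
            ∀ x, G.Adj v x → x ∈ zfBlueAt G F B t)} := rfl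

lemma zfBlueAt_mono (G : SimpleGraph V) (F : Set (V × V)) (B : Set V) {s t : ℕ}
    (h : s ≤ t) : zfBlueAt G F B s ⊆ zfBlueAt G F B t := by
  induction t with
  | zero => simp_all
  | succ t ih =>
    rcases Nat.lt_or_ge s (t + 1) with h' | h'
    · refine (ih (Nat.lt_succ_iff.mp h')).trans ?_
      rw [zfBlueAt_succ]
      exact Set.subset_union_left
    · have : s = t + 1 := le_antisymm h h'
      subst this; rfl

lemma zfValid_mem {G : SimpleGraph V} :
    ∀ (L : List (V × V)) (blue forced : Set V), zfValidList G blue forced L →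
      ∀ p ∈ L, p.2 ∉ blue ∧ p.1 ∉ forced := by
  intro L
  induction L with
  | nil => intro _ _ _ p hp; simp at hp
  | cons q L ih =>
    intro blue forced hv p hp
    rcases List.mem_cons.mp hp with rfl | hp'
    · exact ⟨hv.1.2.1, hv.1.2.2.1⟩
    · have := ih _ _ hv.2 p hp'
      exact ⟨fun h => this.1 (Set.mem_insert_of_mem _ h),
        fun h => this.2 (Set.mem_insert_of_mem _ h)⟩

lemma zfValid_fst_unique {G : SimpleGraph V} :
    ∀ (L : List (V × V)) (blue forced : Set V), zfValidList G blue forced L →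
      ∀ u w w', (u, w) ∈ L → (u, w') ∈ L → w = w' := by
  intro L
  induction L with
  | nil => simp
  | cons q L ih =>
    intro blue forced hv u w w' h1 h2
    rcases List.mem_cons.mp h1 with e1 | h1' <;> rcases List.mem_cons.mp h2 with e2 | h2'
    · rw [← e1] at e2; exact (Prod.mk.injEq u w u w').mp (by rw [e2]) |>.2.symm ▸ rfl
    · exfalso
      have := (zfValid_mem L _ _ hv.2 (u, w') h2').2
      rw [← e1] at this
      exact this (Set.mem_insert _ _)
    · exfalso
      have := (zfValid_mem L _ _ hv.2 (u, w) h1').2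
      rw [← e2] at this
      exact this (Set.mem_insert _ _)
    · exact ih _ _ hv.2 u w w' h1' h2'

lemma zfValid_snd_unique {G : SimpleGraph V} :
    ∀ (L : List (V × V)) (blue forced : Set V), zfValidList G blue forced L →
      ∀ u u' w, (u, w) ∈ L → (u', w) ∈ L → u = u' := by
  intro L
  induction L with
  | nil => simp
  | cons q L ih =>
    intro blue forced hv u u' w h1 h2
    rcases List.mem_cons.mp h1 with e1 | h1' <;> rcases List.mem_cons.mp h2 with e2 | h2'
    · rw [← e1] at e2; exact ((Prod.mk.injEq u' w u w).mp (by rw [e2])).1.symm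
    · exfalso
      have := (zfValid_mem L _ _ hv.2 (u', w) h2').1
      rw [← e1] at this
      exact this (Set.mem_insert _ _)
    · exfalso
      have := (zfValid_mem L _ _ hv.2 (u, w) h1').1
      rw [← e2] at this
      exact this (Set.mem_insert _ _)
    · exact ih _ _ hv.2 u u' w h1' h2'

lemma zfValidList_append {G : SimpleGraph V} :
    ∀ (L1 L2 : List (V × V)) (blue forced : Set V),
      zfValidList G blue forced L1 →
      zfValidList G (blue ∪ {w | ∃ u, (u, w) ∈ L1}) (forced ∪ {u | ∃ w, (u, w) ∈ L1}) L2 →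
      zfValidList G blue forced (L1 ++ L2) := by
  intro L1
  induction L1 with
  | nil =>
    intro L2 blue forced _ h2
    have e1 : blue ∪ {w | ∃ u, (u, w) ∈ ([] : List (V × V))} = blue := by simp
    have e2 : forced ∪ {u | ∃ w, (u, w) ∈ ([] : List (V × V))} = forced := by simp
    rw [e1, e2] at h2
    simpa using h2
  | cons q L1 ih =>
    intro L2 blue forced h1 h2
    have e1 : insert q.2 blue ∪ {w | ∃ u, (u, w) ∈ L1} =
        blue ∪ {w | ∃ u, (u, w) ∈ q :: L1} := by
      ext x
      simp only [Set.mem_union, Set.mem_insert_iff, Set.mem_setOf_eq, List.mem_cons]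
      constructor
      · rintro ((rfl | hx) | ⟨u, hu⟩)
        · exact Or.inr ⟨q.1, Or.inl rfl⟩
        · exact Or.inl hx
        · exact Or.inr ⟨u, Or.inr hu⟩
      · rintro (hx | ⟨u, (h | h)⟩)
        · exact Or.inl (Or.inr hx)
        · exact Or.inl (Or.inl (by rw [← h]))
        · exact Or.inr ⟨u, h⟩
    have e2 : insert q.1 forced ∪ {u | ∃ w, (u, w) ∈ L1} =
        forced ∪ {u | ∃ w, (u, w) ∈ q :: L1} := by
      ext x
      simp only [Set.mem_union, Set.mem_insert_iff, Set.mem_setOf_eq, List.mem_cons]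
      constructor
      · rintro ((rfl | hx) | ⟨w, hw⟩)
        · exact Or.inr ⟨q.2, Or.inl rfl⟩
        · exact Or.inl hx
        · exact Or.inr ⟨w, Or.inr hw⟩
      · rintro (hx | ⟨w, (h | h)⟩)
        · exact Or.inl (Or.inr hx)
        · exact Or.inl (Or.inl (by rw [← h]))
        · exact Or.inr ⟨w, h⟩
    rw [← e1, ← e2] at h2
    exact ⟨h1.1, ih L2 _ _ h1.2 h2⟩

/-- Key lemma: a round of standard forces in a supergraph `H`, performed sequentially,
is a valid list of `⌊Z⌋` forces in `G`. -/
lemma lemA {G H : SimpleGraph V} (hGH : G ≤ H) (blue0 : Set V) :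
    ∀ (l : List (V × V)) (blue forced : Set V),
      blue0 ⊆ blue →
      (l.map Prod.snd).Nodup →
      (∀ p ∈ l, p.2 ∉ blue) →
      (∀ p ∈ l, p.1 ∈ blue) →
      (∀ p ∈ l, H.Adj p.1 p.2) →
      (∀ p ∈ l, ∀ x, H.Adj p.1 x → x ∉ blue0 → x = p.2) →
      (∀ u ∈ forced, ∀ x, H.Adj u x → x ∈ blue) →
      zfValidList G blue forced l ∧
        ∀ u, (u ∈ forced ∨ ∃ w, (u, w) ∈ l) → ∀ x, H.Adj u x →
          x ∈ blue ∪ {w | ∃ v, (v, w) ∈ l} := by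
  intro l
  induction l with
  | nil =>
    intro blue forced _ _ _ _ _ _ hforced
    refine ⟨trivial, ?_⟩
    rintro u (hu | ⟨w, hw⟩) x hx
    · exact Or.inl (hforced u hu x hx)
    · simp at hw
  | cons q l ih =>
    intro blue forced h0 hnd hwhite hblue hadj huniq hforced
    have hqmem : q ∈ q :: l := List.mem_cons_self
    have hqv : zfForceValid G blue forced q.1 q.2 := by
      refine ⟨hblue q hqmem, hwhite q hqmem, ?_, ?_⟩
      · intro hqf
        exact hwhite q hqmem (hforced q.1 hqf q.2 (hadj q hqmem))
      · by_cases hGadj : G.Adj q.1 q.2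
        · left
          exact ⟨hGadj, fun x hx hxb => huniq q hqmem x (hGH hx) (fun h => hxb (h0 h))⟩
        · right
          intro x hx
          rcases Classical.em (x ∈ blue0) with h | h
          · exact h0 h
          · have hxw : x = q.2 := huniq q hqmem x (hGH hx) h
            exact absurd (hxw ▸ hx) hGadj
    have hnd' : (l.map Prod.snd).Nodup := (List.nodup_cons.mp hnd).2
    have hq2nm : q.2 ∉ l.map Prod.snd := (List.nodup_cons.mp hnd).1
    obtain ⟨hv, hgood⟩ := ih (insert q.2 blue) (insert q.1 forced)
      (h0.trans (Set.subset_insert _ _))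
      hnd'
      (by
        intro p hp
        intro hmem
        rcases Set.mem_insert_iff.mp hmem with h | h
        · exact hq2nm (h ▸ List.mem_map_of_mem (f := Prod.snd) hp)
        · exact hwhite p (List.mem_cons_of_mem q hp) h)
      (fun p hp => Set.mem_insert_of_mem _ (hblue p (List.mem_cons_of_mem q hp)))
      (fun p hp => hadj p (List.mem_cons_of_mem q hp))
      (fun p hp => huniq p (List.mem_cons_of_mem q hp))
      (by
        intro u hu x hx
        rcases Set.mem_insert_iff.mp hu with rfl | hu'
        · rcases Classical.em (x ∈ blue0) with h | h
          · exact Set.mem_insert_of_mem _ (h0 h)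
          · have : x = q.2 := huniq q hqmem x hx h
            exact this ▸ Set.mem_insert _ _
        · exact Set.mem_insert_of_mem _ (hforced u hu' x hx))
    refine ⟨⟨hqv, hv⟩, ?_⟩
    intro u hu x hx
    have key : x ∈ insert q.2 blue ∪ {w | ∃ v, (v, w) ∈ l} →
        x ∈ blue ∪ {w | ∃ v, (v, w) ∈ q :: l} := by
      rintro (h | ⟨v, hv'⟩)
      · rcases Set.mem_insert_iff.mp h with rfl | h
        · exact Or.inr ⟨q.1, List.mem_cons.mpr (Or.inl rfl)⟩
        · exact Or.inl h
      · exact Or.inr ⟨v, List.mem_cons_of_mem q hv'⟩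
    rcases hu with hu | ⟨w, hw⟩
    · exact key (hgood u (Or.inl (Set.mem_insert_of_mem _ hu)) x hx)
    · rcases List.mem_cons.mp hw with e | hw'
      · have : u = q.1 := by rw [← e]
        exact key (hgood u (Or.inl (this ▸ Set.mem_insert _ _)) x hx)
      · exact key (hgood u (Or.inr ⟨w, hw'⟩) x hx)

/-- Direction ≤: from a standard zero forcing scheme in a spanning supergraph `H`,
build a set of `⌊Z⌋` forces of `G` that is at least as fast. -/
lemma exists_zf_of_zstep [Fintype V] {G H : SimpleGraph V} (hGH : G ≤ H) (B : Set V)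
    (t : ℕ) (ht : (zStep H)^[t] B = Set.univ) :
    ∃ F : Set (V × V), IsZFForceSet G B F ∧ zfBlueAt G F B t = Set.univ := by
  classical
  set S : ℕ → Set V := fun s => (zStep H)^[s] B with hS
  have hch : ∀ s w, ∃ u, (w ∈ S (s + 1) ∧ w ∉ S s) →
      u ∈ S s ∧ H.Adj u w ∧ ∀ x, H.Adj u x → x ∉ S s → x = w := by
    intro s w
    rcases Classical.em (w ∈ S (s + 1) ∧ w ∉ S s) with ⟨h1, h2⟩ | h
    · have hmem : w ∈ zStep H (S s) := by
        have : S (s + 1) = zStep H (S s) := Function.iterate_succ_apply' (zStep H) s B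
        rwa [this] at h1
      rw [zStep, Set.mem_union, Set.mem_setOf_eq] at hmem
      rcases hmem with h | ⟨u, hu, hadj, huniq⟩
      · exact absurd h h2
      · exact ⟨u, fun _ => ⟨hu, hadj, huniq⟩⟩
    · exact ⟨w, fun hc => absurd hc h⟩
  choose f hf using hch
  set R : ℕ → List (V × V) := fun s =>
    ((S (s + 1) \ S s).toFinite.toFinset.toList).map (fun w => (f s w, w)) with hR
  set L : ℕ → List (V × V) := fun s => ((List.range s).map R).flatten with hLdef
  have hmemR : ∀ s p, p ∈ R s ↔ ∃ w, w ∈ S (s + 1) \ S s ∧ p = (f s w, w) := by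
    intro s p
    rw [hR]
    simp only [List.mem_map, Finset.mem_toList, Set.Finite.mem_toFinset]
    constructor
    · rintro ⟨w, hw, rfl⟩; exact ⟨w, hw, rfl⟩
    · rintro ⟨w, hw, rfl⟩; exact ⟨w, hw, rfl⟩
  have hmemL : ∀ s p, p ∈ L s ↔ ∃ r < s, p ∈ R r := by
    intro s p
    rw [hLdef]
    simp only [List.mem_flatten, List.mem_map, List.mem_range]
    constructor
    · rintro ⟨l, ⟨r, hr, rfl⟩, hp⟩; exact ⟨r, hr, hp⟩
    · rintro ⟨r, hr, hp⟩; exact ⟨R r, ⟨r, hr, rfl⟩, hp⟩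
  have main : ∀ s, zfValidList G B ∅ (L s) ∧ endBlue B (L s) = S s ∧
      ∀ u ∈ endForced (L s), ∀ x, H.Adj u x → x ∈ S s := by
    intro s
    induction s with
    | zero =>
      have h0 : L 0 = [] := by rw [hLdef]; simp
      refine ⟨by rw [h0]; trivial, ?_, ?_⟩
      · rw [h0, endBlue]
        have : {w : V | ∃ u, (u, w) ∈ ([] : List (V × V))} = ∅ := by simp
        rw [this, Set.union_empty]
        rfl
      · rw [h0]; rintro u ⟨w, hw⟩; simp at hw
    | succ s ihs =>
      obtain ⟨hval, hblue, hgood⟩ := ihs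
      have hsplit : L (s + 1) = L s ++ R s := by
        simp only [hLdef, List.range_succ, List.map_append, List.flatten_append]
        simp
      have hSsub : S s ⊆ S (s + 1) := zStep_iter_mono H B (Nat.le_succ s)
      have hRsnd : (R s).map Prod.snd = (S (s + 1) \ S s).toFinite.toFinset.toList := by
        rw [hR, List.map_map]
        have hcomp : (Prod.snd ∘ fun w : V => (f s w, w)) = id := rfl
        rw [hcomp, List.map_id]
      have hndR : ((R s).map Prod.snd).Nodup := by
        rw [hRsnd]; exact Finset.nodup_toList _
      have hpR : ∀ p ∈ R s, p.2 ∈ S (s + 1) \ S s ∧ p.1 = f s p.2 := by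
        intro p hp
        rcases (hmemR s p).mp hp with ⟨w, hw, rfl⟩
        exact ⟨hw, rfl⟩
      have hfspec : ∀ w, w ∈ S (s + 1) \ S s →
          f s w ∈ S s ∧ H.Adj (f s w) w ∧ ∀ x, H.Adj (f s w) x → x ∉ S s → x = w :=
        fun w hw => hf s w ⟨hw.1, hw.2⟩
      obtain ⟨hv2, hgood2⟩ := lemA hGH (S s) (R s) (S s) (endForced (L s))
        (subset_refl _) hndR
        (fun p hp => (hpR p hp).1.2)
        (fun p hp => by
          obtain ⟨hw, he⟩ := hpR p hp
          rw [he]; exact (hfspec p.2 hw).1)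
        (fun p hp => by
          obtain ⟨hw, he⟩ := hpR p hp
          rw [he]; exact (hfspec p.2 hw).2.1)
        (fun p hp => by
          obtain ⟨hw, he⟩ := hpR p hp
          rw [he]; exact (hfspec p.2 hw).2.2)
        hgood
      have hvalid' : zfValidList G B ∅ (L (s + 1)) := by
        rw [hsplit]
        apply zfValidList_append (L s) (R s) B ∅ hval
        have eb : B ∪ {w | ∃ u, (u, w) ∈ L s} = S s := hblue
        have ef : (∅ : Set V) ∪ {u | ∃ w, (u, w) ∈ L s} = endForced (L s) := by
          rw [Set.empty_union]; rfl
        rw [eb, ef]; exact hv2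
      have hT : {w | ∃ u, (u, w) ∈ R s} = S (s + 1) \ S s := by
        ext w
        simp only [Set.mem_setOf_eq]
        constructor
        · rintro ⟨u, hu⟩; exact (hpR (u, w) hu).1
        · intro hw
          exact ⟨f s w, (hmemR s _).mpr ⟨w, hw, rfl⟩⟩
      have hblue' : endBlue B (L (s + 1)) = S (s + 1) := by
        rw [hsplit, endBlue]
        have hsplitset : {w | ∃ u, (u, w) ∈ L s ++ R s} =
            {w | ∃ u, (u, w) ∈ L s} ∪ {w | ∃ u, (u, w) ∈ R s} := by
          ext w
          simp only [Set.mem_setOf_eq, Set.mem_union, List.mem_append]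
          constructor
          · rintro ⟨u, h | h⟩
            exacts [Or.inl ⟨u, h⟩, Or.inr ⟨u, h⟩]
          · rintro (⟨u, h⟩ | ⟨u, h⟩)
            exacts [⟨u, Or.inl h⟩, ⟨u, Or.inr h⟩]
        rw [hsplitset, ← Set.union_assoc]
        have eb : B ∪ {w | ∃ u, (u, w) ∈ L s} = S s := hblue
        rw [eb, hT, Set.union_diff_cancel hSsub]
      refine ⟨hvalid', hblue', ?_⟩
      intro u hu x hx
      have hu' : u ∈ endForced (L s) ∨ ∃ w, (u, w) ∈ R s := by
        rcases hu with ⟨w, hw⟩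
        rw [hsplit] at hw
        rcases List.mem_append.mp hw with h | h
        exacts [Or.inl ⟨w, h⟩, Or.inr ⟨w, h⟩]
      have hres := hgood2 u hu' x hx
      rcases hres with h | h
      · exact hSsub h
      · rw [hT] at h; exact h.1
  have hLtuniv : endBlue B (L t) = Set.univ := by rw [(main t).2.1]; exact ht
  refine ⟨{p | p ∈ L t}, ⟨L t, (main t).1, ?_, rfl⟩, ?_⟩
  · intro u w hc
    exact hc.2.1 (by rw [hLtuniv]; trivial)
  · have hFst : ∀ u w w', (u, w) ∈ L t → (u, w') ∈ L t → w = w' :=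
      zfValid_fst_unique (L t) B ∅ (main t).1
    have sched : ∀ s, s ≤ t → S s ⊆ zfBlueAt G {p | p ∈ L t} B s := by
      intro s
      induction s with
      | zero => exact fun _ x hx => hx
      | succ s ihs =>
        intro hst
        have ih := ihs (Nat.le_of_succ_le hst)
        intro w hw
        by_cases hwb : w ∈ zfBlueAt G {p | p ∈ L t} B s
        · exact zfBlueAt_mono G _ B (Nat.le_succ s) hwb
        · by_cases hws : w ∈ S s
          · exact absurd (ih hws) hwb
          · have hspec := hf s w ⟨hw, hws⟩
            have hFm : (f s w, w) ∈ L t :=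
              (hmemL t _).mpr ⟨s, hst, (hmemR s _).mpr ⟨w, ⟨hw, hws⟩, rfl⟩⟩
            rw [zfBlueAt_succ]
            refine Set.mem_union_right _ ⟨f s w, hFm, ih hspec.1, hwb, ?_, ?_⟩
            · intro w' hw' hw'b
              have hww : w' = w := hFst _ _ _ hw' hFm
              exact absurd (hww ▸ hw'b) hwb
            · by_cases hG : G.Adj (f s w) w
              · exact Or.inl ⟨hG, fun x hx hxb =>
                  hspec.2.2 x (hGH hx) fun hxs => hxb (ih hxs)⟩
              · refine Or.inr fun x hx => ?_
                by_cases hxs : x ∈ S s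
                · exact ih hxs
                · exact absurd (hspec.2.2 x (hGH hx) hxs ▸ hx) hG
    apply Set.eq_univ_of_univ_subset
    calc Set.univ = S t := ht.symm
      _ ⊆ _ := sched t le_rfl

/-- Direction ≥: a set of `⌊Z⌋` forces of `G` gives a standard zero forcing scheme in
the spanning supergraph obtained by adding an edge for each force. -/
lemma zfBlueAt_subset_zstep {G : SimpleGraph V} {B : Set V} {F : Set (V × V)}
    (hF : IsZFForceSet G B F) :
    ∀ s, zfBlueAt G F B s ⊆
      (zStep (G ⊔ SimpleGraph.fromEdgeSet {e | ∃ p ∈ F, e = s(p.1, p.2)}))^[s] B := by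
  classical
  obtain ⟨Lw, hvalid, _, hFeq⟩ := hF
  set H := G ⊔ SimpleGraph.fromEdgeSet {e | ∃ p ∈ F, e = s(p.1, p.2)} with hH
  have hmemF : ∀ p : V × V, p ∈ F ↔ p ∈ Lw := by
    intro p; rw [hFeq]; rfl
  have hwnB : ∀ u w, (u, w) ∈ F → w ∉ B := fun u w h =>
    (zfValid_mem Lw B ∅ hvalid (u, w) ((hmemF _).mp h)).1
  have hfst : ∀ u w w', (u, w) ∈ F → (u, w') ∈ F → w = w' := fun u w w' h1 h2 =>
    zfValid_fst_unique Lw B ∅ hvalid u w w' ((hmemF _).mp h1) ((hmemF _).mp h2)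
  have hsnd : ∀ u u' w, (u, w) ∈ F → (u', w) ∈ F → u = u' := fun u u' w h1 h2 =>
    zfValid_snd_unique Lw B ∅ hvalid u u' w ((hmemF _).mp h1) ((hmemF _).mp h2)
  have hTF : ∀ s x v, (x, v) ∈ F → v ∈ zfBlueAt G F B s → x ∈ zfBlueAt G F B s := by
    intro s
    induction s with
    | zero => intro x v hxv hv; exact absurd hv (hwnB x v hxv)
    | succ s ih =>
      intro x v hxv hv
      rw [zfBlueAt_succ] at hv
      rcases hv with hv | ⟨x', hx', hx'b, _⟩
      · exact zfBlueAt_mono G F B (Nat.le_succ s) (ih x v hxv hv)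
      · have hxx : x' = x := hsnd x' x v hx' hxv
        rw [zfBlueAt_succ]
        exact Set.mem_union_left _ (hxx ▸ hx'b)
  intro s
  induction s with
  | zero => exact fun x hx => hx
  | succ s ih =>
    intro w hw
    rw [Function.iterate_succ_apply']
    rw [zfBlueAt_succ] at hw
    rcases hw with hw | ⟨v, hvF, hvb, hwb, _, hcond⟩
    · exact subset_zStep _ _ (ih hw)
    · have hvw : v ≠ w := fun h => hwb (h ▸ hvb)
      have hadjH : H.Adj v w := by
        rw [hH, SimpleGraph.sup_adj]
        exact Or.inr ((SimpleGraph.fromEdgeSet_adj _).mpr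
          ⟨⟨(v, w), hvF, rfl⟩, hvw⟩)
      rw [zStep, Set.mem_union, Set.mem_setOf_eq]
      refine Or.inr ⟨v, ih hvb, hadjH, ?_⟩
      intro x hx hxS
      have hxnb : x ∉ zfBlueAt G F B s := fun h => hxS (ih h)
      rw [hH, SimpleGraph.sup_adj] at hx
      rcases hx with hxG | hxE
      · rcases hcond with ⟨_, huniq⟩ | hall
        · exact huniq x hxG hxnb
        · exact absurd (hall x hxG) hxnb
      · obtain ⟨⟨p, hpF, hpe⟩, hne⟩ := (SimpleGraph.fromEdgeSet_adj _).mp hxE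
        have hpe' : (v = p.1 ∧ x = p.2) ∨ (v = p.2 ∧ x = p.1) := by
          rw [Sym2.eq_iff] at hpe
          tauto
        rcases hpe' with ⟨h1, h2⟩ | ⟨h1, h2⟩
        · have hpvx : (v, x) ∈ F := by
            have : p = (v, x) := Prod.ext h1.symm h2.symm
            rwa [this] at hpF
          exact hfst v x w hpvx hvF
        · have hpxv : (x, v) ∈ F := by
            have : p = (x, v) := Prod.ext h2.symm h1.symm
            rwa [this] at hpF
          exact absurd (hTF s x v hpxv hvb) hxnb

end Stmt3Aux

/-- `th_⌊Z⌋(G) = min{ th_Z(H) : H a spanning supergraph of G }`. -/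
theorem stmt3 {V : Type*} [Fintype V] (G : SimpleGraph V) :
    thZFgraph G = sInf {n : ℕ∞ | ∃ H : SimpleGraph V, G ≤ H ∧ n = thZgraph H} := by
  classical
  apply le_antisymm
  · -- thZFgraph G ≤ thZgraph H for every spanning supergraph H
    apply le_sInf
    rintro n ⟨H, hGH, rfl⟩
    have huniv : IsZeroForcingSet H Set.univ := ⟨0, rfl⟩
    have hne : {n : ℕ∞ | ∃ B : Set V, IsZeroForcingSet H B ∧ n = thZ H B}.Nonempty :=
      ⟨thZ H Set.univ, Set.univ, huniv, rfl⟩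
    obtain ⟨B, hBzf, hEq⟩ := csInf_mem hne
    have hne2 : {n : ℕ∞ | ∃ t : ℕ, n = t ∧ (zStep H)^[t] B = Set.univ}.Nonempty := by
      obtain ⟨t, hti⟩ := hBzf
      exact ⟨(t : ℕ∞), t, rfl, hti⟩
    obtain ⟨t₀, ht₀eq, ht₀⟩ := csInf_mem hne2
    obtain ⟨F, hFzf, hFt⟩ := exists_zf_of_zstep hGH B t₀ ht₀
    have h1 : thZFgraph G ≤ thZF G B := sInf_le ⟨B, rfl⟩
    have h2 : ptZF G B ≤ (t₀ : ℕ∞) := by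
      refine le_trans (sInf_le ⟨F, hFzf, rfl⟩) (sInf_le ⟨t₀, rfl, hFt⟩)
    have h3 : ptZ H B = (t₀ : ℕ∞) := ht₀eq
    calc thZFgraph G ≤ thZF G B := h1
      _ = (B.ncard : ℕ∞) + ptZF G B := rfl
      _ ≤ (B.ncard : ℕ∞) + (t₀ : ℕ∞) := add_le_add le_rfl h2
      _ = (B.ncard : ℕ∞) + ptZ H B := by rw [h3]
      _ = thZ H B := rfl
      _ = thZgraph H := hEq.symm
  · -- for every B, some spanning supergraph H has thZgraph H ≤ thZF G B
    apply le_sInf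
    rintro n ⟨B, rfl⟩
    rcases eq_or_ne (ptZF G B) ⊤ with htop | htop
    · have : thZF G B = ⊤ := by rw [thZF, htop, add_top]
      rw [this]
      exact le_top
    · have hne : {n : ℕ∞ | ∃ F : Set (V × V), IsZFForceSet G B F ∧
          n = ptZFofF G F B}.Nonempty := by
        by_contra h
        rw [Set.not_nonempty_iff_eq_empty] at h
        exact htop (by rw [ptZF, h, sInf_empty])
      obtain ⟨F, hFzf, hFeq⟩ := csInf_mem hne
      have hptF : ptZF G B = ptZFofF G F B := hFeq
      have htop2 : ptZFofF G F B ≠ ⊤ := hptF ▸ htop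
      have hne2 : {n : ℕ∞ | ∃ t : ℕ, n = t ∧ zfBlueAt G F B t = Set.univ}.Nonempty := by
        by_contra h
        rw [Set.not_nonempty_iff_eq_empty] at h
        exact htop2 (by rw [ptZFofF, h, sInf_empty])
      obtain ⟨t₀, ht₀eq, ht₀⟩ := csInf_mem hne2
      set H := G ⊔ SimpleGraph.fromEdgeSet {e | ∃ p ∈ F, e = s(p.1, p.2)} with hHdef
      have hHuniv : (zStep H)^[t₀] B = Set.univ :=
        Set.eq_univ_of_univ_subset (ht₀ ▸ zfBlueAt_subset_zstep hFzf t₀)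
      have hZFS : IsZeroForcingSet H B := ⟨t₀, hHuniv⟩
      have hpt : ptZF G B = (t₀ : ℕ∞) := hptF.trans ht₀eq
      calc sInf {n : ℕ∞ | ∃ H : SimpleGraph V, G ≤ H ∧ n = thZgraph H}
          ≤ thZgraph H := sInf_le ⟨H, le_sup_left, rfl⟩
        _ ≤ thZ H B := sInf_le ⟨B, hZFS, rfl⟩
        _ = (B.ncard : ℕ∞) + ptZ H B := rfl
        _ ≤ (B.ncard : ℕ∞) + (t₀ : ℕ∞) := by
            have : ptZ H B ≤ (t₀ : ℕ∞) := sInf_le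
              (show ((t₀ : ℕ∞)) ∈ {n : ℕ∞ | ∃ t : ℕ, n = (t : ℕ∞) ∧
                (zStep H)^[t] B = Set.univ} from ⟨t₀, rfl, hHuniv⟩)
            exact add_le_add le_rfl this
        _ = thZF G B := by rw [thZF, hpt]

end ZFT
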